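/- arXiv:2409.10634 — 2 statements merged into one kernel-verified Lean document; each statement's English description precedes it below -/
import Mathlib

section
/- A nonempty set A ⊆ F_2^n satisfies ‖1_A‖_A ≤ 1 if and only if A is a coset of a subgroup of F_2^n, in which case ‖1_A‖_A = 1. -/
open Finset
open scoped Classical

noncomputable def chi {n : ℕ} (a x : Fin n → ZMod 2) : ℝ :=
  if ∑ i, a i * x i = (0 : ZMod 2) then 1 else -1

noncomputable def fhat {n : ℕ} (f : (Fin n → ZMod 2) → ℝ) (a : Fin n → ZMod 2) : ℝ :=
  (∑ x, f x * chi a x) / 2 ^ n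

noncomputable def specNorm {n : ℕ} (f : (Fin n → ZMod 2) → ℝ) : ℝ :=
  ∑ a, |fhat f a|

noncomputable def ind {n : ℕ} (A : Set (Fin n → ZMod 2)) : (Fin n → ZMod 2) → ℝ :=
  fun x => if x ∈ A then 1 else 0

/-- `C` is a coset of a subgroup of `𝔽₂ⁿ`. -/
def IsCoset {n : ℕ} (C : Set (Fin n → ZMod 2)) : Prop :=
  ∃ (W : Submodule (ZMod 2) (Fin n → ZMod 2)) (c : Fin n → ZMod 2),
    C = {x | x - c ∈ W}

lemma zmod2_cases : ∀ u : ZMod 2, u = 0 ∨ u = 1 := by decide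

lemma chi_cases {n : ℕ} (a x : Fin n → ZMod 2) : chi a x = 1 ∨ chi a x = -1 := by
  unfold chi; split <;> simp

lemma chi_abs {n : ℕ} (a x : Fin n → ZMod 2) : |chi a x| = 1 := by
  rcases chi_cases a x with h | h <;> rw [h] <;> norm_num

lemma chi_add_right {n : ℕ} (a x y : Fin n → ZMod 2) :
    chi a (x + y) = chi a x * chi a y := by
  unfold chi
  have h : ∑ i, a i * (x + y) i = (∑ i, a i * x i) + ∑ i, a i * y i := by
    simp [mul_add, Finset.sum_add_distrib]
  rw [h]
  rcases zmod2_cases (∑ i, a i * x i) with h1 | h1 <;>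
    rcases zmod2_cases (∑ i, a i * y i) with h2 | h2 <;>
      rw [h1, h2] <;> norm_num <;> decide

lemma zmod2_neg : ∀ u : ZMod 2, -u = u := by decide

lemma pi_neg {n : ℕ} (x : Fin n → ZMod 2) : -x = x :=
  funext fun i => zmod2_neg (x i)

lemma pi_sub {n : ℕ} (x c : Fin n → ZMod 2) : x - c = x + c := by
  rw [sub_eq_add_neg, pi_neg]

lemma pi_add_self {n : ℕ} (c : Fin n → ZMod 2) : c + c = 0 := by
  have : ∀ u : ZMod 2, u + u = 0 := by decide
  exact funext fun i => this (c i)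

lemma pi_add_add {n : ℕ} (x c : Fin n → ZMod 2) : x + c + c = x := by
  rw [add_assoc, pi_add_self, add_zero]

lemma chi_zero_right {n : ℕ} (a : Fin n → ZMod 2) : chi a 0 = 1 := by
  simp [chi]

lemma chi_add_left {n : ℕ} (a b x : Fin n → ZMod 2) :
    chi (a + b) x = chi a x * chi b x := by
  unfold chi
  have h : ∑ i, (a + b) i * x i = (∑ i, a i * x i) + ∑ i, b i * x i := by
    simp [add_mul, Finset.sum_add_distrib]
  rw [h]
  rcases zmod2_cases (∑ i, a i * x i) with h1 | h1 <;>
    rcases zmod2_cases (∑ i, b i * x i) with h2 | h2 <;>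
      rw [h1, h2] <;> norm_num <;> decide

noncomputable def delta {n : ℕ} (i : Fin n) : Fin n → ZMod 2 :=
  fun j => if j = i then 1 else 0

lemma chi_single {n : ℕ} (i : Fin n) (z : Fin n → ZMod 2) (hz : z i ≠ 0) :
    chi (delta i) z = -1 := by
  unfold chi delta
  have h : ∑ j, (if j = i then (1 : ZMod 2) else 0) * z j = z i := by
    rw [Finset.sum_eq_single_of_mem i (mem_univ i)]
    · simp
    · intro j _ hj; rw [if_neg hj, zero_mul]
  rw [h, if_neg hz]

lemma sum_chi {n : ℕ} (z : Fin n → ZMod 2) :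
    ∑ a, chi a z = if z = 0 then (2 ^ n : ℝ) else 0 := by
  split
  · next h =>
    subst h
    simp [chi_zero_right, Finset.card_univ]
  · next h =>
    have ⟨i, hi⟩ : ∃ i, z i ≠ 0 := by
      by_contra hc; push_neg at hc; exact h (funext hc)
    set w0 : Fin n → ZMod 2 := delta i with hw0
    have key : ∑ a, chi a z = ∑ a, chi (a + w0) z :=
      Fintype.sum_equiv (Equiv.subRight w0) _ _ (fun a => by simp)
    have : ∑ a, chi (a + w0) z = -∑ a, chi a z := by
      simp_rw [chi_add_left, hw0, chi_single i z hi]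
      simp [Finset.sum_neg_distrib]
    linarith [key, this]

lemma pi_add_eq_zero_iff {n : ℕ} (y x : Fin n → ZMod 2) : y + x = 0 ↔ y = x := by
  constructor
  · intro h
    have := congrArg (· + x) h
    simpa [pi_add_add] using this
  · intro h; subst h; exact pi_add_self y

lemma two_pow_ne {n : ℕ} : (2 : ℝ) ^ n ≠ 0 := by positivity

lemma inversion {n : ℕ} (f : (Fin n → ZMod 2) → ℝ) (x : Fin n → ZMod 2) :
    ∑ a, fhat f a * chi a x = f x := by
  unfold fhat
  have step1 : ∑ a, (∑ y, f y * chi a y) / 2 ^ n * chi a x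
      = (∑ a, ∑ y, f y * (chi a y * chi a x)) / 2 ^ n := by
    rw [Finset.sum_div]
    refine Finset.sum_congr rfl fun a _ => ?_
    rw [div_mul_eq_mul_div, Finset.sum_mul]
    congr 1
    refine Finset.sum_congr rfl fun y _ => by ring
  rw [step1, Finset.sum_comm]
  have step2 : ∀ y, ∑ a, f y * (chi a y * chi a x) = f y * (if y = x then (2:ℝ)^n else 0) := by
    intro y
    rw [← Finset.mul_sum]
    congr 1
    calc ∑ a, chi a y * chi a x = ∑ a, chi a (y + x) := by
          refine Finset.sum_congr rfl fun a _ => (chi_add_right a y x).symm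
      _ = if y + x = 0 then (2:ℝ)^n else 0 := sum_chi (y + x)
      _ = if y = x then (2:ℝ)^n else 0 := by simp only [pi_add_eq_zero_iff]
  simp_rw [step2, mul_ite, mul_zero]
  rw [Finset.sum_ite_eq' Finset.univ x, if_pos (mem_univ x)]
  field_simp

lemma mem_shift_iff {n : ℕ} (W : Submodule (ZMod 2) (Fin n → ZMod 2))
    (y w0 : Fin n → ZMod 2) (hw0 : w0 ∈ W) : y + w0 ∈ W ↔ y ∈ W := by
  constructor
  · intro h
    have := W.add_mem h hw0
    rwa [pi_add_add] at this
  · intro h; exact W.add_mem h hw0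

noncomputable def Tsum {n : ℕ} (W : Submodule (ZMod 2) (Fin n → ZMod 2))
    (a : Fin n → ZMod 2) : ℝ :=
  ∑ y, if y ∈ W then chi a y else 0

lemma Tsum_nonneg {n : ℕ} (W : Submodule (ZMod 2) (Fin n → ZMod 2))
    (a : Fin n → ZMod 2) : 0 ≤ Tsum W a := by
  by_cases hex : ∃ w0 ∈ W, chi a w0 = -1
  · obtain ⟨w0, hw0, hchi⟩ := hex
    have key : Tsum W a = ∑ y, if y + w0 ∈ W then chi a (y + w0) else 0 :=
      Fintype.sum_equiv (Equiv.subRight w0) _ _ (fun y => by simp)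
    have key2 : Tsum W a = -Tsum W a := by
      nth_rewrite 1 [key]
      unfold Tsum
      rw [← Finset.sum_neg_distrib]
      refine Finset.sum_congr rfl fun y _ => ?_
      rw [mem_shift_iff W y w0 hw0, chi_add_right, hchi]
      split <;> ring
    have : Tsum W a = 0 := by linarith
    rw [this]
  · push_neg at hex
    refine Finset.sum_nonneg fun y _ => ?_
    split
    · next h =>
      rcases chi_cases a y with h1 | h1
      · rw [h1]; norm_num
      · exact absurd h1 (hex y h)
    · exact le_refl 0

lemma Tsum_total {n : ℕ} (W : Submodule (ZMod 2) (Fin n → ZMod 2)) :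
    ∑ a, Tsum W a = (2:ℝ) ^ n := by
  unfold Tsum
  rw [Finset.sum_comm]
  have step : ∀ y : Fin n → ZMod 2,
      (∑ a, if y ∈ W then chi a y else 0) = if y = 0 then (2:ℝ)^n else 0 := by
    intro y
    by_cases hy : y ∈ W
    · simp only [if_pos hy]
      exact sum_chi y
    · have hy0 : y ≠ 0 := fun h => hy (h ▸ W.zero_mem)
      simp [if_neg hy, if_neg hy0]
  simp_rw [step]
  rw [Finset.sum_ite_eq' Finset.univ 0, if_pos (mem_univ 0)]

lemma fhat_coset {n : ℕ} (W : Submodule (ZMod 2) (Fin n → ZMod 2))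
    (c : Fin n → ZMod 2) (a : Fin n → ZMod 2) :
    fhat (ind {x | x - c ∈ W}) a = Tsum W a * chi a c / 2 ^ n := by
  unfold fhat ind
  congr 1
  have step1 : ∀ x : Fin n → ZMod 2,
      (if x ∈ {x | x - c ∈ W} then (1:ℝ) else 0) * chi a x
      = if x - c ∈ W then chi a x else 0 := by
    intro x
    simp only [Set.mem_setOf_eq, ite_mul, one_mul, zero_mul]
  simp_rw [step1]
  have step2 : (∑ x, if x - c ∈ W then chi a x else 0)
      = ∑ y, if y + c - c ∈ W then chi a (y + c) else 0 :=
    Fintype.sum_equiv (Equiv.subRight c) _ _ (fun y => by simp)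
  rw [step2]
  unfold Tsum
  rw [Finset.sum_mul]
  refine Finset.sum_congr rfl fun y _ => ?_
  rw [add_sub_cancel_right, chi_add_right, ite_mul, zero_mul]

lemma specNorm_coset {n : ℕ} (W : Submodule (ZMod 2) (Fin n → ZMod 2))
    (c : Fin n → ZMod 2) :
    specNorm (ind {x | x - c ∈ W}) = 1 := by
  unfold specNorm
  have habs : ∀ a : Fin n → ZMod 2, |fhat (ind {x | x - c ∈ W}) a| = Tsum W a / 2 ^ n := by
    intro a
    rw [fhat_coset, abs_div, abs_mul, chi_abs, mul_one,
      abs_of_nonneg (Tsum_nonneg W a), abs_of_pos (by positivity : (0:ℝ) < 2 ^ n)]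
  simp_rw [habs]
  rw [← Finset.sum_div, Tsum_total]
  field_simp

lemma one_le_specNorm {n : ℕ} (A : Set (Fin n → ZMod 2)) {c : Fin n → ZMod 2}
    (hc : c ∈ A) : 1 ≤ specNorm (ind A) := by
  have h := inversion (ind A) c
  have h1 : ind A c = 1 := if_pos hc
  rw [h1] at h
  calc (1:ℝ) = ∑ a, fhat (ind A) a * chi a c := h.symm
    _ ≤ ∑ a, |fhat (ind A) a| := by
        refine Finset.sum_le_sum fun a _ => ?_
        calc fhat (ind A) a * chi a c ≤ |fhat (ind A) a * chi a c| := le_abs_self _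
          _ = |fhat (ind A) a| := by rw [abs_mul, chi_abs, mul_one]
    _ = specNorm (ind A) := rfl

lemma eq_forcing {n : ℕ} (A : Set (Fin n → ZMod 2)) (h1 : specNorm (ind A) = 1)
    {x : Fin n → ZMod 2} (hx : x ∈ A) :
    ∀ a, fhat (ind A) a * chi a x = |fhat (ind A) a| := by
  have hinv := inversion (ind A) x
  have hindx : ind A x = 1 := if_pos hx
  rw [hindx] at hinv
  have hle : ∀ a ∈ Finset.univ, fhat (ind A) a * chi a x ≤ |fhat (ind A) a| := by
    intro a _
    calc fhat (ind A) a * chi a x ≤ |fhat (ind A) a * chi a x| := le_abs_self _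
      _ = |fhat (ind A) a| := by rw [abs_mul, chi_abs, mul_one]
  have hsum : ∑ a, fhat (ind A) a * chi a x = ∑ a, |fhat (ind A) a| := by
    rw [hinv]; exact h1.symm
  intro a
  exact (Finset.sum_eq_sum_iff_of_le hle).1 hsum a (mem_univ a)

theorem stmt3 {n : ℕ} (A : Set (Fin n → ZMod 2)) (hA : A.Nonempty) :
    (specNorm (ind A) ≤ 1 ↔ IsCoset A) ∧
      (IsCoset A → specNorm (ind A) = 1) := by
  have coset_imp : IsCoset A → specNorm (ind A) = 1 := by
    rintro ⟨W, c, rfl⟩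
    exact specNorm_coset W c
  refine ⟨⟨fun hle => ?_, fun hC => (coset_imp hC).le⟩, coset_imp⟩
  obtain ⟨c, hc⟩ := hA
  have heq : specNorm (ind A) = 1 := le_antisymm hle (one_le_specNorm A hc)
  set g := fhat (ind A) with hg
  let W : Submodule (ZMod 2) (Fin n → ZMod 2) :=
    { carrier := {y | ∀ a, g a ≠ 0 → chi a y = 1}
      add_mem' := fun {y z} hy hz a ha => by
        rw [chi_add_right, hy a ha, hz a ha, one_mul]
      zero_mem' := fun a _ => chi_zero_right a
      smul_mem' := fun r y hy => by
        rcases zmod2_cases r with h | h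
        · rw [h, zero_smul]; exact fun a _ => chi_zero_right a
        · rw [h, one_smul]; exact hy }
  have hmem : ∀ y, y ∈ W ↔ ∀ a, g a ≠ 0 → chi a y = 1 := fun y => Iff.rfl
  refine ⟨W, c, ?_⟩
  ext x
  simp only [Set.mem_setOf_eq, hmem]
  constructor
  · intro hx a ha
    have hfx := eq_forcing A heq hx a
    have hfc := eq_forcing A heq hc a
    have hxc : chi a x = chi a c := by
      have := hfx.trans hfc.symm
      exact mul_left_cancel₀ ha this
    rw [pi_sub, chi_add_right, hxc]
    rcases chi_cases a c with h | h <;> rw [h] <;> norm_num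
  · intro h
    have hinv := inversion (ind A) x
    have hterm : ∀ a, g a * chi a x = |g a| := by
      intro a
      by_cases ha : g a = 0
      · rw [ha]; simp
      · have h1 : chi a (x - c) = 1 := h a ha
        have hx' : chi a x = chi a c := by
          have : chi a (x - c + c) = chi a (x - c) * chi a c := chi_add_right a _ _
          rw [sub_add_cancel, h1, one_mul] at this
          exact this
        rw [hx']
        exact eq_forcing A heq hc a
    rw [show ∑ a, fhat (ind A) a * chi a x = ∑ a, g a * chi a x from rfl] at hinv
    simp_rw [hterm] at hinv
    have : ind A x = 1 := by rw [← hinv]; exact heq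
    by_contra hxA
    rw [show ind A x = 0 from if_neg hxA] at this
    norm_num at this
end

section
/- Let m > 1 be an integer and η_i := cos((m−i)π/(2m−1)) for i ∈ [m]. Then there exists σ : [m] → ℝ such that (i) ∑_{i=1}^{m} η_i σ(i) = 1, (ii) ∑_{i=1}^{m} η_i^{2k−1} σ(i) = 0 for every 2 ≤ k ≤ m, and (iii) ∑_{i=1}^{m} |σ(i)| ≤ 2m − 1. -/
open Finset Real Polynomial

noncomputable def EO : ℕ → Polynomial ℝ × Polynomial ℝ
  | 0 => (1, 1)
  | j+1 =>
    let p := EO j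
    let e := 2 * Polynomial.X * p.2 - p.1
    (e, 2 * e - p.2)

lemma EO_eval_cos (j : ℕ) (θ : ℝ) :
    (EO j).1.eval (Real.cos θ ^ 2) = Real.cos (2 * j * θ) ∧
    Real.cos θ * (EO j).2.eval (Real.cos θ ^ 2) = Real.cos ((2 * j + 1) * θ) := by
  induction j with
  | zero => simp [EO]
  | succ j ih =>
    obtain ⟨h1, h2⟩ := ih
    have key : ∀ a : ℝ, Real.cos (a + θ) + Real.cos (a - θ) = 2 * Real.cos a * Real.cos θ := by
      intro a; rw [Real.cos_add, Real.cos_sub]; ring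
    have hEeq : (EO (j+1)).1 = 2 * Polynomial.X * (EO j).2 - (EO j).1 := rfl
    have hOeq : (EO (j+1)).2 = 2 * (EO (j+1)).1 - (EO j).2 := rfl
    rw [show (2 * (j:ℝ)) * θ = ((2*(j:ℝ)+1)*θ) - θ from by ring] at h1
    have hE : (EO (j+1)).1.eval (Real.cos θ ^ 2) = Real.cos (2 * ((j:ℝ)+1) * θ) := by
      rw [hEeq]
      simp only [Polynomial.eval_sub, Polynomial.eval_mul, Polynomial.eval_ofNat,
        Polynomial.eval_X]
      rw [show (2 * ((j:ℝ)+1)) * θ = ((2*(j:ℝ)+1)*θ) + θ from by ring]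
      linear_combination 2 * Real.cos θ * h2 - h1 - key ((2*(j:ℝ)+1)*θ)
    constructor
    · push_cast
      exact hE
    · push_cast
      rw [hOeq]
      simp only [Polynomial.eval_sub, Polynomial.eval_mul, Polynomial.eval_ofNat]
      rw [show (2 * ((j:ℝ)+1) + 1) * θ = ((2*((j:ℝ)+1))*θ) + θ from by ring]
      rw [show (2*(j:ℝ)+1) * θ = ((2*((j:ℝ)+1))*θ) - θ from by ring] at h2
      linear_combination 2 * Real.cos θ * hE - h2 - key ((2*((j:ℝ)+1))*θ)

lemma EO_natDegree (j : ℕ) : (EO j).1.natDegree ≤ j ∧ (EO j).2.natDegree ≤ j := by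
  induction j with
  | zero => simp [EO]
  | succ j ih =>
    obtain ⟨h1, h2⟩ := ih
    have hEeq : (EO (j+1)).1 = 2 * Polynomial.X * (EO j).2 - (EO j).1 := rfl
    have hOeq : (EO (j+1)).2 = 2 * (EO (j+1)).1 - (EO j).2 := rfl
    have hEd : (EO (j+1)).1.natDegree ≤ j + 1 := by
      rw [hEeq]
      refine le_trans (Polynomial.natDegree_sub_le _ _) (max_le ?_ (by omega))
      refine le_trans Polynomial.natDegree_mul_le ?_
      have h2X : (2 * Polynomial.X : Polynomial ℝ).natDegree ≤ 1 :=
        le_trans Polynomial.natDegree_mul_le (by simp)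
      omega
    refine ⟨hEd, ?_⟩
    rw [hOeq]
    refine le_trans (Polynomial.natDegree_sub_le _ _) (max_le ?_ (by omega))
    refine le_trans Polynomial.natDegree_mul_le ?_
    simpa using hEd

lemma EO_eval_zero (j : ℕ) :
    (EO j).1.eval 0 = (-1:ℝ)^j ∧ (EO j).2.eval 0 = (-1:ℝ)^j * (2*j+1) := by
  induction j with
  | zero => simp [EO]
  | succ j ih =>
    obtain ⟨h1, h2⟩ := ih
    have hEeq : (EO (j+1)).1 = 2 * Polynomial.X * (EO j).2 - (EO j).1 := rfl
    have hOeq : (EO (j+1)).2 = 2 * (EO (j+1)).1 - (EO j).2 := rfl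
    have hE0 : (EO (j+1)).1.eval 0 = (-1:ℝ)^(j+1) := by
      rw [hEeq]; simp [h1, pow_succ]
    refine ⟨hE0, ?_⟩
    rw [hOeq]
    simp only [Polynomial.eval_sub, Polynomial.eval_mul, Polynomial.eval_ofNat, hE0, h2]
    push_cast
    ring

lemma neg_one_pow_mod (a b : ℕ) (h : a % 2 = b % 2) : (-1:ℝ)^a = (-1:ℝ)^b := by
  rw [← Nat.div_add_mod a 2, ← Nat.div_add_mod b 2, h, pow_add, pow_add, pow_mul, pow_mul]
  norm_num

theorem stmt6 (m : ℕ) (hm : 1 < m)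
    (η : ℕ → ℝ) (hη : ∀ i, η i = Real.cos (((m : ℝ) - i) * Real.pi / (2 * m - 1))) :
    ∃ σ : ℕ → ℝ,
      (∑ i ∈ Finset.Icc 1 m, η i * σ i = 1) ∧
      (∀ k : ℕ, 2 ≤ k → k ≤ m → ∑ i ∈ Finset.Icc 1 m, η i ^ (2 * k - 1) * σ i = 0) ∧
      (∑ i ∈ Finset.Icc 1 m, |σ i| ≤ 2 * (m : ℝ) - 1) := by
  have hπ := Real.pi_pos
  have hm1 : (1:ℝ) ≤ (m:ℝ) := by exact_mod_cast hm.le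
  have hnpos : (0:ℝ) < 2 * (m:ℝ) - 1 := by linarith
  set s : Finset ℕ := Finset.Icc 1 m with hs
  set θ : ℕ → ℝ := fun i => ((m : ℝ) - i) * Real.pi / (2 * m - 1) with hθdef
  have hθ0 : ∀ i ∈ s, 0 ≤ θ i := by
    intro i hi
    rw [Finset.mem_Icc] at hi
    have : (i:ℝ) ≤ m := by exact_mod_cast hi.2
    have h1 : 0 ≤ ((m:ℝ) - i) * Real.pi := by nlinarith
    exact div_nonneg h1 hnpos.le
  have hθlt : ∀ i ∈ s, θ i < Real.pi / 2 := by
    intro i hi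
    rw [Finset.mem_Icc] at hi
    have h1 : (1:ℝ) ≤ (i:ℝ) := by exact_mod_cast hi.1
    rw [hθdef, div_lt_iff₀ hnpos]
    nlinarith
  have hηeq : ∀ i, η i = Real.cos (θ i) := hη
  have hηpos : ∀ i ∈ s, 0 < η i := by
    intro i hi
    rw [hηeq i]
    exact Real.cos_pos_of_mem_Ioo ⟨by linarith [hθ0 i hi], hθlt i hi⟩
  have hθanti : ∀ i ∈ s, ∀ j ∈ s, i < j → θ j < θ i := by
    intro i hi j hj hij
    rw [Finset.mem_Icc] at hi hj
    have : (i:ℝ) < j := by exact_mod_cast hij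
    show ((m:ℝ) - j) * Real.pi / (2 * m - 1) < ((m:ℝ) - i) * Real.pi / (2 * m - 1)
    rw [div_lt_div_iff₀ hnpos hnpos]
    nlinarith [mul_pos (mul_pos (sub_pos.mpr this) hπ) hnpos]
  have hηmono : ∀ i ∈ s, ∀ j ∈ s, i < j → η i < η j := by
    intro i hi j hj hij
    rw [hηeq, hηeq]
    exact Real.strictAntiOn_cos ⟨hθ0 j hj, by linarith [hθlt j hj]⟩
      ⟨hθ0 i hi, by linarith [hθlt i hi]⟩ (hθanti i hi j hj hij)
  set v : ℕ → ℝ := fun i => η i ^ 2 with hv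
  have hvmono : ∀ i ∈ s, ∀ j ∈ s, i < j → v i < v j := by
    intro i hi j hj hij
    exact pow_lt_pow_left₀ (hηmono i hi j hj hij) (hηpos i hi).le two_ne_zero
  have hvs : Set.InjOn v s := by
    intro a ha b hb hab
    rcases lt_trichotomy a b with h | h | h
    · exact absurd hab (ne_of_lt (hvmono a ha b hb h))
    · exact h
    · exact absurd hab.symm (ne_of_lt (hvmono b hb a ha h))
  have hcard : s.card = m := by rw [hs, Nat.card_Icc]; omega
  -- key interpolation identity
  have keyA : ∀ f : Polynomial ℝ, f.natDegree ≤ m - 1 →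
      ∑ i ∈ s, f.eval (v i) * (Lagrange.basis s v i).eval 0 = f.eval 0 := by
    intro f hf
    have hdeg : f.degree < (s.card : WithBot ℕ) := by
      refine lt_of_le_of_lt Polynomial.degree_le_natDegree ?_
      rw [hcard]
      exact_mod_cast (by omega : f.natDegree < m)
    have := congrArg (Polynomial.eval 0) (Lagrange.eq_interpolate hvs hdeg)
    rw [Lagrange.interpolate_apply, Polynomial.eval_finset_sum] at this
    simp only [Polynomial.eval_mul, Polynomial.eval_C] at this
    exact this.symm
  set σ : ℕ → ℝ := fun i => (Lagrange.basis s v i).eval 0 / η i with hσ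
  have hησ : ∀ i ∈ s, η i * σ i = (Lagrange.basis s v i).eval 0 := by
    intro i hi
    have hne : η i ≠ 0 := (hηpos i hi).ne'
    rw [hσ]
    exact mul_div_cancel₀ _ hne
  refine ⟨σ, ?_, ?_, ?_⟩
  · -- (i)
    have := keyA 1 (by simp)
    simp only [Polynomial.eval_one, one_mul] at this
    rw [← this]
    exact Finset.sum_congr rfl fun i hi => by rw [hησ i hi]
  · -- (ii)
    intro k hk2 hkm
    have := keyA (Polynomial.X ^ (k-1)) (by simpa using by omega)
    simp only [Polynomial.eval_pow, Polynomial.eval_X, zero_pow (by omega : k - 1 ≠ 0)] at this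
    rw [← this]
    refine Finset.sum_congr rfl fun i hi => ?_
    have h2k : 2 * k - 1 = 2 * (k - 1) + 1 := by omega
    rw [h2k, pow_succ, pow_mul, mul_assoc, hησ i hi]
  · -- (iii)
    set O : Polynomial ℝ := (EO (m-1)).2 with hO
    have hOdeg : O.natDegree ≤ m - 1 := (EO_natDegree (m-1)).2
    have hO0 : O.eval 0 = (-1:ℝ)^(m-1) * (2 * (m:ℝ) - 1) := by
      have := (EO_eval_zero (m-1)).2
      rw [hO, this]
      congr 1
      have : ((m - 1 : ℕ) : ℝ) = (m:ℝ) - 1 := by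
        rw [Nat.cast_sub hm.le]; simp
      rw [this]; ring
    have hOv : ∀ i ∈ s, O.eval (v i) = (-1:ℝ)^(m-i) / η i := by
      intro i hi
      have hmem := Finset.mem_Icc.mp hi
      have h2 := (EO_eval_cos (m-1) (θ i)).2
      have hcast : (2 * ((m-1:ℕ):ℝ) + 1) = 2 * (m:ℝ) - 1 := by
        rw [Nat.cast_sub hm.le]; simp; ring
      have harg : (2 * ((m-1:ℕ):ℝ) + 1) * θ i = ((m - i : ℕ) : ℝ) * Real.pi := by
        rw [hcast, hθdef]
        rw [Nat.cast_sub hmem.2]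
        field_simp
      rw [harg] at h2
      have hcos : Real.cos (((m - i : ℕ) : ℝ) * Real.pi) = (-1:ℝ)^(m-i) := by
        have := Real.cos_nat_mul_pi_sub 0 (m - i)
        simpa using this
      rw [hcos] at h2
      have hne : η i ≠ 0 := (hηpos i hi).ne'
      show Polynomial.eval (η i ^ 2) O = (-1:ℝ)^(m-i) / η i
      have hveq : η i ^ 2 = Real.cos (θ i) ^ 2 := by rw [hηeq]
      rw [← hveq] at h2
      rw [← hηeq] at h2
      rw [eq_div_iff hne]
      linarith [h2]
    -- sign analysis
    have hsign : ∀ i ∈ s, |σ i| = (-1:ℝ)^(i-1) * σ i := by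
      intro i hi
      have hmem := Finset.mem_Icc.mp hi
      have hBpos : 0 ≤ (-1:ℝ)^(i-1) * (Lagrange.basis s v i).eval 0 := by
        have hBeq : (Lagrange.basis s v i).eval 0 =
            ∏ j ∈ s.erase i, ((v i - v j)⁻¹ * (0 - v j)) := by
          rw [Lagrange.basis, Polynomial.eval_prod]
          refine Finset.prod_congr rfl fun j hj => ?_
          rw [Lagrange.basisDivisor]
          simp
        have hfac : ∀ j ∈ s.erase i, (v i - v j)⁻¹ * (0 - v j) =
            (if j < i then (-1:ℝ) else 1) * |(v i - v j)⁻¹ * (0 - v j)| := by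
          intro j hj
          obtain ⟨hji, hjs⟩ := Finset.mem_erase.mp hj
          have hjm := Finset.mem_Icc.mp hjs
          have hvj : 0 < v j := pow_pos (hηpos j hjs) 2
          by_cases hlt : j < i
          · have hvlt : v j < v i := hvmono j hjs i hi hlt
            have hneg : (v i - v j)⁻¹ * (0 - v j) < 0 := by
              apply mul_neg_of_pos_of_neg
              · exact inv_pos.mpr (by linarith)
              · linarith
            rw [if_pos hlt, abs_of_neg hneg]; ring
          · have hilt : i < j := by omega
            have hvlt : v i < v j := hvmono i hi j hjs hilt
            have hpos : 0 < (v i - v j)⁻¹ * (0 - v j) := by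
              apply mul_pos_of_neg_of_neg
              · exact inv_lt_zero.mpr (by linarith)
              · linarith
            rw [if_neg hlt, abs_of_pos hpos]; ring
        have hfilt : ((s.erase i).filter (· < i)).card = i - 1 := by
          have : (s.erase i).filter (· < i) = Finset.Icc 1 (i-1) := by
            ext j
            simp only [Finset.mem_filter, Finset.mem_erase, hs, Finset.mem_Icc]
            omega
          rw [this, Nat.card_Icc]
          omega
        rw [hBeq, Finset.prod_congr rfl hfac, Finset.prod_mul_distrib]
        rw [Finset.prod_ite, Finset.prod_const, Finset.prod_const, one_pow, mul_one, hfilt]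
        rw [← mul_assoc, ← pow_add]
        have : (-1:ℝ)^((i-1) + (i-1)) = 1 := by
          rw [← two_mul, pow_mul]; norm_num
        rw [this, one_mul]
        exact Finset.prod_nonneg fun j _ => abs_nonneg _
      have hσnn : 0 ≤ (-1:ℝ)^(i-1) * σ i := by
        rw [hσ]
        simp only []
        rw [← mul_div_assoc]
        exact div_nonneg hBpos (hηpos i hi).le
      calc |σ i| = |(-1:ℝ)^(i-1) * σ i| := by
            rw [abs_mul, abs_pow, abs_neg, abs_one, one_pow, one_mul]
        _ = (-1:ℝ)^(i-1) * σ i := abs_of_nonneg hσnn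
    have hfin : ∑ i ∈ s, |σ i| = 2 * (m:ℝ) - 1 := by
      have step1 : ∑ i ∈ s, |σ i| = (-1:ℝ)^(m-1) * ∑ i ∈ s, (-1:ℝ)^(m-i) * σ i := by
        rw [Finset.mul_sum]
        refine Finset.sum_congr rfl fun i hi => ?_
        rw [hsign i hi, ← mul_assoc, ← pow_add]
        congr 1
        have hmem := Finset.mem_Icc.mp hi
        exact neg_one_pow_mod _ _ (by omega)
      have step2 : ∑ i ∈ s, (-1:ℝ)^(m-i) * σ i = (-1:ℝ)^(m-1) * (2 * (m:ℝ) - 1) := by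
        rw [← hO0, ← keyA O hOdeg]
        refine Finset.sum_congr rfl fun i hi => ?_
        rw [hOv i hi, ← hησ i hi]
        have hne : η i ≠ 0 := (hηpos i hi).ne'
        field_simp
      rw [step1, step2, ← mul_assoc, ← pow_add]
      have : (-1:ℝ)^((m-1) + (m-1)) = 1 := by rw [← two_mul, pow_mul]; norm_num
      rw [this, one_mul]
    linarith [hfin.le]
end
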